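/- Let ε > 0 and let (x_n) be a sequence of positive reals with lim_{n→∞} n·x_n = 1 + ε. Then for the complete graphs K_n, lim_{n→∞} L(x_n, K_n)/n = ε/(1+ε) and lim_{n→∞} I(x_n, K_n) = 0. -/

import Mathlib

open Filter Topology

/-- A self-avoiding walk from `o` in the graph `G`, encoded as the (nonempty) list of
visited vertices: it starts at `o`, consecutive vertices are adjacent, and no vertex is
visited more than once.  A list of length `k+1` corresponds to a walk with `k` edges. -/
def IsSAWFrom {V : Type*} (G : SimpleGraph V) (o : V) (l : List V) : Prop :=
  l.head? = some o ∧ l.Chain' G.Adj ∧ l.Nodup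

/-- `sawCount G o k = |SAW_k(o,G)|`, the number of self-avoiding walks from `o` with
exactly `k` edges. -/
noncomputable def sawCount {V : Type*} (G : SimpleGraph V) (o : V) (k : ℕ) : ℕ :=
  Nat.card {l : List V // IsSAWFrom G o l ∧ l.length = k + 1}

/-- The partition function `Z_{o,G}(x) = Σ_k |SAW_k(o,G)| x^k`.  Since a self-avoiding
walk in a graph on `|V|` vertices has at most `|V| - 1` edges, the sum over
`k < |V|` captures all nonzero terms. -/
noncomputable def sawZ {V : Type*} [Fintype V] (G : SimpleGraph V) (o : V) (x : ℝ) : ℝ :=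
  ∑ k ∈ Finset.range (Fintype.card V), (sawCount G o k : ℝ) * x ^ k

/-- The expected length `L(x,o,G) = Z_{o,G}(x)⁻¹ Σ_k k |SAW_k(o,G)| x^k`. -/
noncomputable def sawL {V : Type*} [Fintype V] (G : SimpleGraph V) (o : V) (x : ℝ) : ℝ :=
  (sawZ G o x)⁻¹ *
    ∑ k ∈ Finset.range (Fintype.card V), (k : ℝ) * (sawCount G o k : ℝ) * x ^ k

/-- The number of pairs `(ω, ω')` of self-avoiding walks from `o`, with `k` resp. `j`
edges, whose vertex sets intersect exactly in `{o}`. -/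
noncomputable def sawPairCount {V : Type*} (G : SimpleGraph V) (o : V) (k j : ℕ) : ℕ :=
  Nat.card {p : List V × List V //
    (IsSAWFrom G o p.1 ∧ p.1.length = k + 1) ∧
    (IsSAWFrom G o p.2 ∧ p.2.length = j + 1) ∧
    {v | v ∈ p.1 ∧ v ∈ p.2} = {o}}

/-- The trivial-intersection probability
`I(x,o,G) = Z_{o,G}(x)⁻² Σ x^{|ω|+|ω'|}`, summed over pairs of self-avoiding walks
from `o` whose vertex sets meet only in `o`. -/
noncomputable def sawI {V : Type*} [Fintype V] (G : SimpleGraph V) (o : V) (x : ℝ) : ℝ :=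
  ((sawZ G o x) ^ 2)⁻¹ *
    ∑ k ∈ Finset.range (Fintype.card V), ∑ j ∈ Finset.range (Fintype.card V),
      (sawPairCount G o k j : ℝ) * x ^ (k + j)

/-- The finite-graph critical exponent `γ(x,o,G) = log Z_{o,G}(x) / log (L(x,o,G) + 1)`. -/
noncomputable def sawGamma {V : Type*} [Fintype V] (G : SimpleGraph V) (o : V) (x : ℝ) : ℝ :=
  Real.log (sawZ G o x) / Real.log (sawL G o x + 1)

/-- A graph is vertex-transitive if its automorphism group acts transitively on vertices. -/
def SimpleGraph.VertexTransitive {V : Type*} (G : SimpleGraph V) : Prop :=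
  ∀ u v : V, ∃ φ : G ≃g G, φ u = v

/-- A graph is `d`-regular: every vertex has exactly `d` neighbours. -/
def SawRegular {V : Type*} (G : SimpleGraph V) (d : ℕ) : Prop :=
  ∀ v : V, Nat.card (G.neighborSet v) = d

/-- `(x n)` is super-critical for the rooted family `(G n, o n)`:
`liminf_n Z_{o_n, G_n}(x_n) = ∞`, i.e. `Z` tends to infinity. -/
def SawSuperCritical {V : ℕ → Type*} [∀ n, Fintype (V n)]
    (G : ∀ n, SimpleGraph (V n)) (o : ∀ n, V n) (x : ℕ → ℝ) : Prop :=
  Tendsto (fun n => sawZ (G n) (o n) (x n)) atTop atTop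

/-- `(x n)` is sub-critical for the rooted family `(G n, o n)`:
`limsup_n Z_{o_n, G_n}(x_n) < ∞`, i.e. the sequence of partition functions is bounded. -/
def SawSubCritical {V : ℕ → Type*} [∀ n, Fintype (V n)]
    (G : ∀ n, SimpleGraph (V n)) (o : ∀ n, V n) (x : ℕ → ℝ) : Prop :=
  BddAbove (Set.range fun n => sawZ (G n) (o n) (x n))

/-- `(x n)` is critical: for every `0 < ε < 1`, `(x n (1+ε))` is super-critical and
`(x n (1-ε))` is sub-critical. -/
def SawCritical {V : ℕ → Type*} [∀ n, Fintype (V n)]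
    (G : ∀ n, SimpleGraph (V n)) (o : ∀ n, V n) (x : ℕ → ℝ) : Prop :=
  ∀ ε : ℝ, 0 < ε → ε < 1 →
    SawSuperCritical G o (fun n => x n * (1 + ε)) ∧
    SawSubCritical G o (fun n => x n * (1 - ε))

/-- `Z_{K_n}(x)` for the complete graph `K_n` on `n` vertices, rooted at an arbitrary
vertex (all choices agree by symmetry); junk value `0` for `n = 0`. -/
noncomputable def completeZ (n : ℕ) (x : ℝ) : ℝ :=
  if h : 0 < n then sawZ (⊤ : SimpleGraph (Fin n)) ⟨0, h⟩ x else 0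

/-- `L(x, K_n)` for the complete graph `K_n`; junk value `0` for `n = 0`. -/
noncomputable def completeL (n : ℕ) (x : ℝ) : ℝ :=
  if h : 0 < n then sawL (⊤ : SimpleGraph (Fin n)) ⟨0, h⟩ x else 0

/-- `I(x, K_n)` for the complete graph `K_n`; junk value `0` for `n = 0`. -/
noncomputable def completeI (n : ℕ) (x : ℝ) : ℝ :=
  if h : 0 < n then sawI (⊤ : SimpleGraph (Fin n)) ⟨0, h⟩ x else 0

/-- `γ(x, K_n)` for the complete graph `K_n`; junk value `0` for `n = 0`. -/
noncomputable def completeGamma (n : ℕ) (x : ℝ) : ℝ :=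
  if h : 0 < n then sawGamma (⊤ : SimpleGraph (Fin n)) ⟨0, h⟩ x else 0

/-- A non-backtracking walk in `G`, encoded as the list of visited vertices:
consecutive vertices are adjacent and `ω_{j+2} ≠ ω_j` for all `j`. -/
def IsNBWalk {V : Type*} (G : SimpleGraph V) (l : List V) : Prop :=
  l.Chain' G.Adj ∧ ∀ i, i + 2 < l.length → l[i]? ≠ l[i + 2]?

/-- The number of non-backtracking walks of length `t` from `u` to `v`. -/
noncomputable def nbCount {V : Type*} (G : SimpleGraph V) (u v : V) (t : ℕ) : ℕ :=
  Nat.card {l : List V //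
    IsNBWalk G l ∧ l.length = t + 1 ∧ l.head? = some u ∧ l.getLast? = some v}

/-- `p_t(u,v)`: the number of non-backtracking walks of length `t` from `u` to `v`
divided by `d(d-1)^{t-1}`, i.e. the probability that the non-backtracking random walk
on a `d`-regular graph started at `u` is at `v` at time `t`. -/
noncomputable def nbProb {V : Type*} (G : SimpleGraph V) (d : ℕ) (u v : V) (t : ℕ) : ℝ :=
  (nbCount G u v t : ℝ) / (d * ((d : ℝ) - 1) ^ (t - 1))

/-- The mixing time of the non-backtracking random walk on the `d`-regular graph `G`
with `N` vertices: the least `t ≥ 1` with `|p_t(u,v) - 1/N| ≤ 1/(2N)` for all `u, v`. -/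
noncomputable def nbMixingTime {V : Type*} [Fintype V] (G : SimpleGraph V) (d : ℕ) : ℕ :=
  sInf {t : ℕ | 1 ≤ t ∧ ∀ u v : V,
    |nbProb G d u v t - 1 / (Fintype.card V : ℝ)| ≤ 1 / (2 * (Fintype.card V : ℝ))}


section SAWProof
open Finset

/-- Nodup lists of fixed length are equivalent to embeddings of `Fin k`. -/
def listNodupEquivEmbedding (β : Type*) (k : ℕ) :
    {l : List β // l.Nodup ∧ l.length = k} ≃ (Fin k ↪ β) where
  toFun l := ⟨fun i => l.1.get (Fin.cast l.2.2.symm i), by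
    intro a b hab
    have := (List.nodup_iff_injective_get.mp l.2.1) hab
    simpa [Fin.ext_iff] using this⟩
  invFun f := ⟨List.ofFn f, List.nodup_ofFn.mpr f.injective, List.length_ofFn⟩
  left_inv := by
    rintro ⟨l, hnd, hlen⟩
    apply Subtype.ext
    apply List.ext_getElem
    · simp [hlen]
    · intro i h1 h2
      simp [List.getElem_ofFn, List.get_eq_getElem]
  right_inv := by
    intro f
    apply DFunLike.ext
    intro i
    simp [List.get_eq_getElem, List.getElem_ofFn]

/-- SAW-style lists (head `o`, nodup, tail satisfying `P`) correspond to
nodup lists over the subtype `{v // P v}`. -/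
def sawListEquiv {V : Type*} (o : V) (P : V → Prop) (hP : ∀ v, P v → v ≠ o) (k : ℕ) :
    {l : List V // l.head? = some o ∧ l.Nodup ∧ (∀ v ∈ l.tail, P v) ∧ l.length = k + 1}
      ≃ {t : List {v : V // P v} // t.Nodup ∧ t.length = k} where
  toFun l := ⟨l.1.tail.attachWith P l.2.2.2.1, by
    constructor
    · have h1 : (l.1.tail.attachWith P l.2.2.2.1).map Subtype.val = l.1.tail :=
        List.attachWith_map_subtype_val _
      have h3 : (l.1.tail).Nodup := l.2.2.1.sublist (List.tail_sublist _)
      rw [← h1] at h3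
      exact h3.of_map _
    · have h4 := l.2.2.2.2
      rw [List.length_attachWith, List.length_tail]
      omega
      ⟩
  invFun t := ⟨o :: t.1.map Subtype.val, by
    refine ⟨rfl, ?_, ?_, ?_⟩
    · rw [List.nodup_cons]
      constructor
      · intro hmem
        obtain ⟨⟨v, hv⟩, _, rfl⟩ := List.mem_map.mp hmem
        exact hP v hv rfl
      · exact t.2.1.map Subtype.val_injective
    · intro v hv
      obtain ⟨⟨w, hw⟩, _, rfl⟩ := List.mem_map.mp hv
      exact hw
    · simp [t.2.2]⟩
  left_inv := by
    rintro ⟨l, hh, hnd, htl, hlen⟩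
    apply Subtype.ext
    simp only
    rw [List.attachWith_map_subtype_val]
    exact (List.eq_cons_of_mem_head? hh).symm
  right_inv := by
    rintro ⟨t, hnd, hlen⟩
    apply Subtype.ext
    simp only [List.tail_cons]
    apply List.ext_getElem
    · simp [List.length_attachWith]
    · intro i h1 h2
      apply Subtype.ext
      rw [List.getElem_attachWith]
      simp only [List.unattach, List.getElem_map]

lemma mem_of_head?_eq {V : Type*} {l : List V} {o : V} (h : l.head? = some o) : o ∈ l :=
  List.mem_of_mem_head? h

lemma count_aux {V : Type*} [Fintype V] [DecidableEq V] (o : V) (P : V → Prop)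
    [DecidablePred P] (hP : ∀ v, P v → v ≠ o) (k : ℕ) :
    Nat.card {l : List V // l.head? = some o ∧ l.Nodup ∧ (∀ v ∈ l.tail, P v) ∧
      l.length = k + 1} = (Fintype.card {v // P v}).descFactorial k := by
  rw [Nat.card_congr ((sawListEquiv o P hP k).trans (listNodupEquivEmbedding _ k)),
    Nat.card_eq_fintype_card, Fintype.card_embedding_eq, Fintype.card_fin]

lemma isSAW_top_iff {V : Type*} {o : V} {l : List V} {k : ℕ} :
    (IsSAWFrom (⊤ : SimpleGraph V) o l ∧ l.length = k + 1) ↔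
      (l.head? = some o ∧ l.Nodup ∧ (∀ v ∈ l.tail, v ≠ o) ∧ l.length = k + 1) := by
  constructor
  · rintro ⟨⟨hh, hc, hnd⟩, hlen⟩
    refine ⟨hh, hnd, ?_, hlen⟩
    intro v hv hveq
    subst hveq
    have hcons := List.eq_cons_of_mem_head? (x := v) (l := l) hh
    rw [hcons, List.nodup_cons] at hnd
    exact hnd.1 hv
  · rintro ⟨hh, hnd, htl, hlen⟩
    refine ⟨⟨hh, ?_, hnd⟩, hlen⟩
    have : l.Chain' (· ≠ ·) := List.Pairwise.isChain hnd
    exact this.imp (fun a b h => by simpa using h)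

lemma card_subtype_ne {V : Type*} [Fintype V] [DecidableEq V] (o : V) :
    Fintype.card {v : V // v ≠ o} = Fintype.card V - 1 := by
  have := Fintype.card_subtype_compl (fun v : V => v = o)
  simpa [Fintype.card_subtype_eq] using this

lemma sawCount_complete {n : ℕ} (o : Fin n) (k : ℕ) :
    sawCount (⊤ : SimpleGraph (Fin n)) o k = (n - 1).descFactorial k := by
  unfold sawCount
  rw [Nat.card_congr (Equiv.subtypeEquivRight (fun l => isSAW_top_iff))]
  rw [count_aux o (fun v => v ≠ o) (fun v h => h) k, card_subtype_ne, Fintype.card_fin]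

lemma head_not_mem_tail {V : Type*} {l : List V} {o : V} (hh : l.head? = some o)
    (hnd : l.Nodup) : o ∉ l.tail := by
  have hcons := List.eq_cons_of_mem_head? (x := o) (l := l) hh
  rw [hcons, List.nodup_cons] at hnd
  exact hnd.1

lemma pair_iff {V : Type*} {o : V} {l1 l2 : List V} {k j : ℕ} :
    ((IsSAWFrom (⊤ : SimpleGraph V) o l1 ∧ l1.length = k + 1) ∧
      (IsSAWFrom (⊤ : SimpleGraph V) o l2 ∧ l2.length = j + 1) ∧
      {v | v ∈ l1 ∧ v ∈ l2} = {o}) ↔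
    ((IsSAWFrom (⊤ : SimpleGraph V) o l1 ∧ l1.length = k + 1) ∧
      (l2.head? = some o ∧ l2.Nodup ∧ (∀ v ∈ l2.tail, v ∉ l1) ∧ l2.length = j + 1)) := by
  constructor
  · rintro ⟨h1, ⟨⟨hh2, hc2, hnd2⟩, hlen2⟩, hset⟩
    refine ⟨h1, hh2, hnd2, ?_, hlen2⟩
    intro v hv hvl1
    have hvl2 : v ∈ l2 := List.mem_of_mem_tail hv
    have : v ∈ ({o} : Set V) := by rw [← hset]; exact ⟨hvl1, hvl2⟩
    rw [Set.mem_singleton_iff] at this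
    subst this
    exact head_not_mem_tail hh2 hnd2 hv
  · rintro ⟨h1, hh2, hnd2, htl2, hlen2⟩
    have hsaw2 : IsSAWFrom (⊤ : SimpleGraph V) o l2 ∧ l2.length = j + 1 :=
      isSAW_top_iff.mpr ⟨hh2, hnd2, fun v hv hveq => by
        subst hveq; exact htl2 v hv (List.mem_of_mem_head? h1.1.1), hlen2⟩
    refine ⟨h1, hsaw2, ?_⟩
    ext v
    simp only [Set.mem_setOf_eq, Set.mem_singleton_iff]
    constructor
    · rintro ⟨hv1, hv2⟩
      have hv2' : v ∈ o :: l2.tail := List.eq_cons_of_mem_head? (x := o) (l := l2) hh2 ▸ hv2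
      rcases List.mem_cons.mp hv2' with h | h
      · exact h
      · exact absurd hv1 (htl2 v h)
    · rintro rfl
      exact ⟨List.mem_of_mem_head? h1.1.1, List.mem_of_mem_head? hh2⟩

def pairSigmaEquiv {V : Type*} (A : List V → Prop) (B : List V → List V → Prop) :
    {p : List V × List V // A p.1 ∧ B p.1 p.2} ≃ Σ a : {l : List V // A l}, {l2 : List V // B a.1 l2} where
  toFun p := ⟨⟨p.1.1, p.2.1⟩, ⟨p.1.2, p.2.2⟩⟩
  invFun q := ⟨(q.1.1, q.2.1), q.1.2, q.2.2⟩
  left_inv := fun ⟨⟨a, b⟩, ⟨h1, h2⟩⟩ => rfl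
  right_inv := fun ⟨⟨a, h1⟩, ⟨b, h2⟩⟩ => rfl

lemma card_subtype_not_mem {n : ℕ} {l : List (Fin n)} {k : ℕ} (hnd : l.Nodup)
    (hlen : l.length = k + 1) : Fintype.card {v : Fin n // v ∉ l} = n - 1 - k := by
  have h1 : Fintype.card {v : Fin n // v ∈ l} = k + 1 := by
    rw [Fintype.card_congr (Equiv.subtypeEquivRight (q := fun v => v ∈ l.toFinset)
      (fun v => by simp [List.mem_toFinset]))]
    rw [Fintype.card_coe, List.toFinset_card_of_nodup hnd, hlen]
  have h2 := Fintype.card_subtype_compl (fun v : Fin n => v ∈ l)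
  rw [h1, Fintype.card_fin] at h2
  rw [h2]
  omega

lemma sawPairCount_complete {n : ℕ} (o : Fin n) (k j : ℕ) :
    sawPairCount (⊤ : SimpleGraph (Fin n)) o k j =
      (n - 1).descFactorial k * (n - 1 - k).descFactorial j := by
  unfold sawPairCount
  rw [Nat.card_congr (Equiv.subtypeEquivRight (fun p => pair_iff))]
  rw [Nat.card_congr (pairSigmaEquiv (fun l => IsSAWFrom (⊤ : SimpleGraph (Fin n)) o l ∧
    l.length = k + 1) (fun l1 l2 => l2.head? = some o ∧ l2.Nodup ∧
    (∀ v ∈ l2.tail, v ∉ l1) ∧ l2.length = j + 1))]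
  have fibEquiv : ∀ a : {l : List (Fin n) // IsSAWFrom (⊤ : SimpleGraph (Fin n)) o l ∧
      l.length = k + 1},
      {l2 : List (Fin n) // l2.head? = some o ∧ l2.Nodup ∧ (∀ v ∈ l2.tail, v ∉ a.1) ∧
        l2.length = j + 1} ≃ (Fin j ↪ Fin (n - 1 - k)) := by
    intro a
    have hP : ∀ v : Fin n, v ∉ a.1 → v ≠ o := fun v hv hveq => by
      subst hveq; exact hv (List.mem_of_mem_head? a.2.1.1)
    refine ((sawListEquiv o (fun v => v ∉ a.1) hP j).trans
      (listNodupEquivEmbedding _ j)).trans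
      (Equiv.embeddingCongr (Equiv.refl _) (Fintype.equivFinOfCardEq ?_))
    exact card_subtype_not_mem (isSAW_top_iff.mp a.2).2.1 a.2.2
  rw [Nat.card_congr ((Equiv.sigmaCongrRight fibEquiv).trans (Equiv.sigmaEquivProd _ _))]
  rw [Nat.card_prod]
  have h1 : Nat.card {l : List (Fin n) // IsSAWFrom (⊤ : SimpleGraph (Fin n)) o l ∧
      l.length = k + 1} = (n - 1).descFactorial k := sawCount_complete o k
  rw [h1, Nat.card_eq_fintype_card, Fintype.card_embedding_eq, Fintype.card_fin,
    Fintype.card_fin]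

noncomputable def sterm (n k : ℕ) (x : ℝ) : ℝ := ((n - 1).descFactorial k : ℝ) * x ^ k

lemma sterm_nonneg (n k : ℕ) {x : ℝ} (hx : 0 ≤ x) : 0 ≤ sterm n k x := by
  unfold sterm; positivity

lemma sterm_succ (n k : ℕ) (x : ℝ) :
    sterm n (k + 1) x = ((n - 1 - k : ℕ) : ℝ) * x * sterm n k x := by
  unfold sterm
  rw [Nat.descFactorial_succ]
  push_cast
  ring

lemma sterm_zero_eval (n : ℕ) (x : ℝ) : sterm n 0 x = 1 := by simp [sterm]

lemma sterm_eq_zero {n k : ℕ} (hn : 0 < n) (h : n ≤ k) (x : ℝ) : sterm n k x = 0 := by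
  unfold sterm
  rw [Nat.descFactorial_eq_zero_iff_lt.mpr (by omega)]
  simp

lemma descFactorial_add (m k j : ℕ) :
    m.descFactorial (k + j) = m.descFactorial k * (m - k).descFactorial j := by
  induction j with
  | zero => simp
  | succ j ih =>
      rw [show k + (j + 1) = (k + j) + 1 by ring, Nat.descFactorial_succ, ih,
        Nat.descFactorial_succ, Nat.sub_sub]
      ring

lemma ratio_pow_le {t : ℕ → ℝ} {ρ : ℝ} (hρ : 0 ≤ ρ) {a : ℕ} :
    ∀ i : ℕ, (∀ k, a ≤ k → k < a + i → ρ * t k ≤ t (k + 1)) → ρ ^ i * t a ≤ t (a + i)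
  | 0, _ => by simp
  | (i + 1), hr => by
      have ih := ratio_pow_le hρ i (fun k hk hk' => hr k hk (by omega))
      have h2 := hr (a + i) (by omega) (by omega)
      calc ρ ^ (i + 1) * t a = ρ * (ρ ^ i * t a) := by ring
        _ ≤ ρ * t (a + i) := mul_le_mul_of_nonneg_left ih hρ
        _ ≤ t (a + i + 1) := h2

lemma geom_sum_bound {r : ℝ} (h0 : 0 ≤ r) (h1 : r < 1) (m : ℕ) :
    ∑ i ∈ range m, r ^ i ≤ 1 / (1 - r) := by
  have h2 : 0 < 1 - r := by linarith
  have h3 : ∑ i ∈ range m, r ^ i = (1 - r ^ m) / (1 - r) := by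
    rw [geom_sum_eq (by linarith) m]
    rw [div_eq_div_iff (by intro hc; rw [sub_eq_zero] at hc; exact absurd hc.symm (by linarith)) (by linarith : (1:ℝ) - r ≠ 0)]
    ring
  rw [h3, div_le_div_iff₀ h2 h2]
  have : (0:ℝ) ≤ r ^ m := pow_nonneg h0 m
  nlinarith

lemma sum_head_le {t : ℕ → ℝ} {ρ : ℝ} (hρ : 1 < ρ) (b : ℕ) (ht : ∀ k, 0 ≤ t k)
    (hr : ∀ k, k < b → ρ * t k ≤ t (k + 1)) :
    ∑ k ∈ range (b + 1), t k ≤ (ρ / (ρ - 1)) * t b := by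
  have hρ0 : 0 < ρ := lt_trans one_pos hρ
  have key : ∀ j, j ≤ b → t (b - j) ≤ ρ⁻¹ ^ j * t b := by
    intro j hj
    have h := ratio_pow_le hρ0.le j (a := b - j)
      (fun k hk hk' => hr k (by omega))
    rw [Nat.sub_add_cancel hj] at h
    have h2 := mul_le_mul_of_nonneg_left h (pow_nonneg (inv_nonneg.mpr hρ0.le) j)
    rwa [← mul_assoc, ← mul_pow, inv_mul_cancel₀ (ne_of_gt hρ0), one_pow, one_mul] at h2
  rw [← Finset.sum_range_reflect]
  calc ∑ j ∈ range (b + 1), t (b + 1 - 1 - j) ≤ ∑ j ∈ range (b + 1), ρ⁻¹ ^ j * t b := by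
        apply Finset.sum_le_sum
        intro j hj
        have hj' : j ≤ b := by
          have := mem_range.mp hj; omega
        have he : b + 1 - 1 - j = b - j := by omega
        rw [he]
        exact key j hj'
    _ = (∑ j ∈ range (b + 1), ρ⁻¹ ^ j) * t b := by rw [← Finset.sum_mul]
    _ ≤ (1 / (1 - ρ⁻¹)) * t b := by
        apply mul_le_mul_of_nonneg_right _ (ht b)
        exact geom_sum_bound (inv_nonneg.mpr hρ0.le) (inv_lt_one_of_one_lt₀ hρ) _
    _ = (ρ / (ρ - 1)) * t b := by
        congr 1
        have hinv : 1 - ρ⁻¹ ≠ 0 := by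
          have : ρ⁻¹ < 1 := inv_lt_one_of_one_lt₀ hρ
          linarith
        rw [one_div, eq_div_iff (by linarith)]
        rw [inv_mul_eq_div, div_eq_iff hinv]
        field_simp
  
lemma sum_tail_le {t : ℕ → ℝ} {ρ : ℝ} (h0 : 0 ≤ ρ) (h1 : ρ < 1) (a n : ℕ)
    (ht : ∀ k, 0 ≤ t k) (hr : ∀ k, a ≤ k → t (k + 1) ≤ ρ * t k) :
    ∑ k ∈ Finset.Ico a n, t k ≤ (1 / (1 - ρ)) * t a := by
  rw [Finset.sum_Ico_eq_sum_range]
  have key : ∀ i : ℕ, t (a + i) ≤ ρ ^ i * t a := by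
    intro i
    induction i with
    | zero => simp
    | succ i ih =>
        calc t (a + i + 1) ≤ ρ * t (a + i) := hr (a + i) (by omega)
          _ ≤ ρ * (ρ ^ i * t a) := mul_le_mul_of_nonneg_left ih h0
          _ = ρ ^ (i + 1) * t a := by ring
  calc ∑ i ∈ range (n - a), t (a + i) ≤ ∑ i ∈ range (n - a), ρ ^ i * t a :=
        Finset.sum_le_sum (fun i _ => key i)
    _ = (∑ i ∈ range (n - a), ρ ^ i) * t a := by rw [← Finset.sum_mul]
    _ ≤ (1 / (1 - ρ)) * t a := mul_le_mul_of_nonneg_right (geom_sum_bound h0 h1 _) (ht a)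

lemma tendsto_mul_pow_zero {q A B : ℝ} (hq0 : 0 < q) (hq1 : q < 1) (hA : 0 < A)
    {m : ℕ → ℕ} (hm : ∀ᶠ n : ℕ in atTop, A * n - B ≤ (m n : ℝ)) :
    Tendsto (fun n : ℕ => (n : ℝ) * q ^ (m n)) atTop (𝓝 0) := by
  have hrA : (0:ℝ) < q ^ (A : ℝ) := Real.rpow_pos_of_pos hq0 _
  have hr : q ^ (A:ℝ) < 1 := Real.rpow_lt_one hq0.le hq1 hA
  have base : Tendsto (fun n : ℕ => (n:ℝ) * (q ^ (A:ℝ)) ^ n) atTop (𝓝 0) := by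
    have := (summable_pow_mul_geometric_of_norm_lt_one 1
      (r := q ^ (A:ℝ)) (by rw [Real.norm_eq_abs, abs_of_pos hrA]; exact hr)).tendsto_atTop_zero
    simpa using this
  have base2 : Tendsto (fun n : ℕ => q ^ (-B : ℝ) * ((n:ℝ) * (q ^ (A:ℝ)) ^ n)) atTop (𝓝 0) := by
    simpa using base.const_mul (q ^ (-B:ℝ))
  apply squeeze_zero' (t₀ := atTop)
  · filter_upwards with n
    positivity
  · filter_upwards [hm] with n hn
    have h1 : q ^ (m n) = q ^ ((m n : ℕ) : ℝ) := (Real.rpow_natCast q (m n)).symm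
    have h2 : q ^ ((m n : ℕ) : ℝ) ≤ q ^ (A * n - B) :=
      Real.rpow_le_rpow_of_exponent_ge hq0 hq1.le hn
    have h3 : q ^ (A * (n:ℝ) - B) = q ^ (-B:ℝ) * (q ^ (A:ℝ)) ^ n := by
      rw [show A * (n:ℝ) - B = -B + A * n by ring, Real.rpow_add hq0,
        Real.rpow_mul hq0.le, Real.rpow_natCast]
    calc (n:ℝ) * q ^ (m n) ≤ (n:ℝ) * q ^ (A * (n:ℝ) - B) := by
          apply mul_le_mul_of_nonneg_left _ (Nat.cast_nonneg n)
          rw [h1]; exact h2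
      _ = q ^ (-B:ℝ) * ((n:ℝ) * (q ^ (A:ℝ)) ^ n) := by rw [h3]; ring
  · exact base2

lemma tendsto_const_pow_zero {q A B C : ℝ} (hq0 : 0 < q) (hq1 : q < 1) (hA : 0 < A)
    (hC : 0 ≤ C) {m : ℕ → ℕ} (hm : ∀ᶠ n : ℕ in atTop, A * n - B ≤ (m n : ℝ)) :
    Tendsto (fun n : ℕ => C * q ^ (m n)) atTop (𝓝 0) := by
  apply squeeze_zero' (t₀ := atTop)
  · filter_upwards with n; positivity
  · filter_upwards [eventually_ge_atTop (Nat.ceil C + 1)] with n hn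
    have hCn : C ≤ (n:ℝ) := le_trans (Nat.le_ceil C) (by exact_mod_cast Nat.le_of_succ_le hn)
    exact mul_le_mul_of_nonneg_right hCn (pow_nonneg hq0.le _)
  · exact tendsto_mul_pow_zero hq0 hq1 hA hm

end SAWProof

section SAWConv
open Finset

lemma completeZ_eq {n : ℕ} (hn : 0 < n) (x : ℝ) :
    completeZ n x = ∑ k ∈ Finset.range n, sterm n k x := by
  rw [completeZ, dif_pos hn]
  unfold sawZ
  rw [Fintype.card_fin]
  exact Finset.sum_congr rfl fun k _ => by rw [sawCount_complete]; rfl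

lemma completeL_eq {n : ℕ} (hn : 0 < n) (x : ℝ) :
    completeL n x = (∑ k ∈ Finset.range n, sterm n k x)⁻¹ *
      ∑ k ∈ Finset.range n, (k : ℝ) * sterm n k x := by
  rw [completeL, dif_pos hn]
  unfold sawL
  rw [← completeZ_eq hn, completeZ, dif_pos hn, Fintype.card_fin]
  congr 1
  exact Finset.sum_congr rfl fun k _ => by rw [sawCount_complete]; unfold sterm; ring

lemma completeI_eq {n : ℕ} (hn : 0 < n) (x : ℝ) :
    completeI n x = ((∑ k ∈ Finset.range n, sterm n k x) ^ 2)⁻¹ *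
      ∑ k ∈ Finset.range n, ∑ j ∈ Finset.range n, sterm n (k + j) x := by
  rw [completeI, dif_pos hn]
  unfold sawI
  rw [← completeZ_eq hn, completeZ, dif_pos hn, Fintype.card_fin]
  congr 1
  refine Finset.sum_congr rfl fun k _ => Finset.sum_congr rfl fun j _ => ?_
  rw [sawPairCount_complete, ← descFactorial_add]
  unfold sterm
  push_cast
  ring

lemma Z_num_pos {n : ℕ} (hn : 0 < n) {x : ℝ} (hx : 0 < x) :
    0 < ∑ k ∈ Finset.range n, sterm n k x := by
  apply Finset.sum_pos' (fun k _ => sterm_nonneg n k hx.le)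
  exact ⟨0, Finset.mem_range.mpr hn, by rw [sterm_zero_eval]; norm_num⟩

lemma inner_sum_le {n : ℕ} (hn : 0 < n) {x : ℝ} (hx : 0 ≤ x) (k : ℕ) :
    ∑ j ∈ Finset.range n, sterm n (k + j) x ≤ ∑ m ∈ Finset.range n, sterm n m x := by
  have h1 : ∑ j ∈ Finset.range n, sterm n (k + j) x
      = ∑ m ∈ Finset.Ico k (k + n), sterm n m x := by
    rw [Finset.sum_Ico_eq_sum_range]
    simp
  rw [h1]
  have h2 : ∑ m ∈ Finset.Ico k (k + n), sterm n m x ≤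
      ∑ m ∈ Finset.range (k + n), sterm n m x := by
    apply Finset.sum_le_sum_of_subset_of_nonneg
    · rw [Finset.range_eq_Ico]
      exact Finset.Ico_subset_Ico (Nat.zero_le _) le_rfl
    · exact fun m _ _ => sterm_nonneg n m hx
  refine h2.trans (le_of_eq ?_)
  symm
  apply Finset.sum_subset (Finset.range_subset_range.mpr (Nat.le_add_left n k))
  intro m hm hnm
  rw [Finset.mem_range] at hm hnm
  exact sterm_eq_zero hn (by omega) x

/-- trivial-intersection probability bound: `0 ≤ I ≤ n / Z`. -/
lemma completeI_bounds {n : ℕ} (hn : 0 < n) {x : ℝ} (hx : 0 < x) :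
    0 ≤ completeI n x ∧
      completeI n x ≤ (n : ℝ) / (∑ k ∈ Finset.range n, sterm n k x) := by
  set Z := ∑ k ∈ Finset.range n, sterm n k x with hZ
  have hZpos : 0 < Z := Z_num_pos hn hx
  rw [completeI_eq hn]
  constructor
  · apply mul_nonneg (by positivity)
    exact Finset.sum_nonneg fun k _ => Finset.sum_nonneg fun j _ =>
      sterm_nonneg n _ hx.le
  · have hS : ∑ k ∈ Finset.range n, ∑ j ∈ Finset.range n, sterm n (k + j) x ≤ n * Z := by
      calc ∑ k ∈ Finset.range n, ∑ j ∈ Finset.range n, sterm n (k + j) x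
          ≤ ∑ _k ∈ Finset.range n, Z := Finset.sum_le_sum fun k _ => inner_sum_le hn hx.le k
        _ = n * Z := by rw [Finset.sum_const, Finset.card_range, nsmul_eq_mul]
    calc (Z ^ 2)⁻¹ * ∑ k ∈ Finset.range n, ∑ j ∈ Finset.range n, sterm n (k + j) x
        ≤ (Z ^ 2)⁻¹ * (n * Z) := by
          apply mul_le_mul_of_nonneg_left hS (by positivity)
      _ = (n : ℝ) / Z := by
          rw [sq, mul_inv, div_eq_mul_inv]
          rw [show Z⁻¹ * Z⁻¹ * ((n:ℝ) * Z) = (n:ℝ) * Z⁻¹ * (Z⁻¹ * Z) by ring,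
            inv_mul_cancel₀ (ne_of_gt hZpos), mul_one]
end SAWConv

set_option maxHeartbeats 1000000 in
lemma master_estimates (ε δ : ℝ) (hε : 0 < ε) (hδ : 0 < δ)
    (hδ1 : δ ≤ ε / (1 + ε)) (hδ2 : 2 * δ ≤ 1 - ε / (1 + ε)) (hδ3 : δ ≤ 1 / (1 + ε))
    (x : ℕ → ℝ) (hx : ∀ n, 0 < x n)
    (hlim : Tendsto (fun n : ℕ => (n : ℝ) * x n) atTop (𝓝 (1 + ε))) :
    ∀ᶠ n : ℕ in atTop,
      (∀ k ≤ ⌊(ε / (1 + ε) - δ / 2) * n⌋₊,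
        (1 + δ * (1 + ε) / 4) * sterm n k (x n) ≤ sterm n (k + 1) (x n)) ∧
      (∀ k, ⌈(ε / (1 + ε) + δ / 2) * n⌉₊ ≤ k →
        sterm n (k + 1) (x n) ≤ (1 - δ * (1 + ε) / 4) * sterm n k (x n)) ∧
      ⌊(ε / (1 + ε) - δ / 2) * n⌋₊ < n ∧ ⌈(ε / (1 + ε) + δ / 2) * n⌉₊ < n ∧ 1 ≤ n := by
  have hε1 : (0:ℝ) < 1 + ε := by linarith
  set c : ℝ := ε / (1 + ε) with hcdef
  set s : ℝ := δ * (1 + ε) / 4 with hsdef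
  have hc0 : 0 < c := by positivity
  have hc1 : c < 1 := by rw [hcdef, div_lt_one hε1]; linarith
  have hkey : (1 + ε) * (1 - c) = 1 := by rw [hcdef]; field_simp; ring
  have hs0 : 0 < s := by positivity
  have hseq : 4 * s = δ * (1 + ε) := by rw [hsdef]; ring
  have hδe : δ * (1 + ε) ≤ 1 := (le_div_iff₀ hε1).mp hδ3
  have hs14 : s ≤ 1 / 4 := by rw [hsdef]; linarith
  have hcoef : 0 < 1 - c - δ / 2 := by linarith
  have hev1 : ∀ᶠ n : ℕ in atTop, |(n : ℝ) * x n - (1 + ε)| < s / 2 := by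
    have := Metric.tendsto_nhds.mp hlim (s / 2) (by positivity)
    simpa [Real.dist_eq] using this
  have hev2 : ∀ᶠ n : ℕ in atTop, 4 * (1 + ε) / s ≤ (n : ℝ) :=
    tendsto_natCast_atTop_atTop.eventually_ge_atTop _
  have hev3 : ∀ᶠ n : ℕ in atTop, 2 / (1 - c - δ / 2) ≤ (n : ℝ) :=
    tendsto_natCast_atTop_atTop.eventually_ge_atTop _
  filter_upwards [hev1, hev2, hev3, eventually_ge_atTop 1] with n hy hn1 hn2 hn3
  have hn0 : (1:ℝ) ≤ (n:ℝ) := by exact_mod_cast hn3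
  have hn0' : (0:ℝ) < n := by linarith
  have hy1 : 1 + ε - s / 2 ≤ (n:ℝ) * x n := by
    have := abs_lt.mp hy; linarith [this.1]
  have hy2 : (n:ℝ) * x n ≤ 1 + ε + s / 2 := by
    have := abs_lt.mp hy; linarith [this.2]
  have hn1' : 4 * (1 + ε) ≤ s * n := by
    rw [div_le_iff₀ hs0] at hn1; linarith
  have hn2' : 2 ≤ (1 - c - δ / 2) * n := by
    rw [div_le_iff₀ hcoef] at hn2; linarith
  have he2 : (1 - c - δ / 2) * (n:ℝ) = (n:ℝ) - c * n - δ * n / 2 := by ring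
  have hδN : 0 ≤ δ * (n:ℝ) := by positivity
  have hcN : 0 ≤ c * (n:ℝ) := by positivity
  have hxpos := hx n
  have hxle : x n ≤ s / 2 := by
    by_contra hcon
    push_neg at hcon
    have h5 : s / 2 * (n:ℝ) < x n * n := mul_lt_mul_of_pos_right hcon hn0'
    have h6 : (n:ℝ) * x n ≤ 2 * (1 + ε) := by linarith
    linarith [mul_comm (x n) (n:ℝ)]
  have hflo : (⌊(c - δ / 2) * n⌋₊ : ℝ) ≤ (c - δ / 2) * n :=
    Nat.floor_le (mul_nonneg (by linarith) hn0'.le)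
  have he3 : (c - δ / 2) * (n:ℝ) = c * n - δ * n / 2 := by ring
  have he4 : (c + δ / 2) * (n:ℝ) = c * n + δ * n / 2 := by ring
  rw [he2] at hn2'
  have hflo2 : (c - δ / 2) * (n:ℝ) ≤ (n:ℝ) - 2 := by
    rw [he3]; linarith
  have hk1n : ⌊(c - δ / 2) * n⌋₊ < n := by
    rw [← Nat.cast_lt (α := ℝ)]
    linarith
  have hcei : (c + δ / 2) * (n:ℝ) ≤ (⌈(c + δ / 2) * n⌉₊ : ℝ) := Nat.le_ceil _
  have hcei2 : (⌈(c + δ / 2) * n⌉₊ : ℝ) < (c + δ / 2) * n + 1 :=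
    Nat.ceil_lt_add_one (mul_nonneg (by linarith) hn0'.le)
  have hk2n : ⌈(c + δ / 2) * n⌉₊ < n := by
    rw [← Nat.cast_lt (α := ℝ)]
    linarith [hcei2, hn2', he4]
  refine ⟨?_, ?_, hk1n, hk2n, hn3⟩
  · intro k hk
    have hkr : (k : ℝ) ≤ (c - δ / 2) * n := le_trans (by exact_mod_cast hk) hflo
    have hkn : k + 2 ≤ n := by
      by_contra hcon
      push_neg at hcon
      have : (n:ℝ) ≤ (k:ℝ) + 1 := by exact_mod_cast (by omega : n ≤ k + 1)
      linarith
    have hcast : ((n - 1 - k : ℕ) : ℝ) = (n:ℝ) - 1 - (k:ℝ) := by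
      rw [Nat.sub_sub, Nat.cast_sub (by omega)]
      push_cast
      ring
    rw [sterm_succ, hcast]
    apply mul_le_mul_of_nonneg_right _ (sterm_nonneg n k hxpos.le)
    -- goal : 1 + s ≤ (n - 1 - k) * x n
    have hprod : 0 ≤ ((c - δ / 2) * n - (k:ℝ)) * x n :=
      mul_nonneg (by linarith) hxpos.le
    have hE : (1 - c + δ / 2) * (1 + ε - s / 2)
        = 1 + 2 * s - (1 - c + δ / 2) * (s / 2) := by
      linear_combination hkey - hseq / 2
    have hco1 : (1 - c + δ / 2) * (s / 2) ≤ s / 2 :=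
      mul_le_of_le_one_left (by linarith) (by linarith)
    have key1 : 1 + 2 * s - s / 2 ≤ (1 - c + δ / 2) * ((n:ℝ) * x n) := by
      have := mul_le_mul_of_nonneg_left hy1 (show (0:ℝ) ≤ 1 - c + δ / 2 by linarith)
      linarith
    have hid : ((n:ℝ) - 1 - (k:ℝ)) * x n
        = (1 - c + δ / 2) * ((n:ℝ) * x n) - x n + ((c - δ / 2) * n - (k:ℝ)) * x n := by
      ring
    linarith
  · intro k hk
    rcases le_or_gt n (k + 1) with hcase | hcase
    · rw [sterm_eq_zero (by omega) hcase]
      exact mul_nonneg (by linarith) (sterm_nonneg n k hxpos.le)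
    · have hkr : (c + δ / 2) * n ≤ (k : ℝ) := le_trans hcei (by exact_mod_cast hk)
      have hcast : ((n - 1 - k : ℕ) : ℝ) = (n:ℝ) - 1 - (k:ℝ) := by
        rw [Nat.sub_sub, Nat.cast_sub (by omega)]
        push_cast
        ring
      rw [sterm_succ, hcast]
      apply mul_le_mul_of_nonneg_right _ (sterm_nonneg n k hxpos.le)
      -- goal : (n - 1 - k) * x n ≤ 1 - s
      have hid2 : (1 - c - δ / 2) * ((n:ℝ) * x n) - ((n:ℝ) - 1 - (k:ℝ)) * x n
          = ((k:ℝ) + 1 - (c + δ / 2) * n) * x n := by ring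
      have hprod2 : 0 ≤ ((k:ℝ) + 1 - (c + δ / 2) * n) * x n :=
        mul_nonneg (by linarith) hxpos.le
      have hE2 : (1 - c - δ / 2) * (1 + ε + s / 2)
          = 1 - 2 * s + (1 - c - δ / 2) * (s / 2) := by
        linear_combination hkey + hseq / 2
      have hco2 : (1 - c - δ / 2) * (s / 2) ≤ s / 2 :=
        mul_le_of_le_one_left (by linarith) (by linarith)
      have h2 : (1 - c - δ / 2) * ((n:ℝ) * x n) ≤ (1 - c - δ / 2) * (1 + ε + s / 2) :=
        mul_le_mul_of_nonneg_left hy2 hcoef.le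
      linarith


lemma ratio_pow_ge {t : ℕ → ℝ} {ρ : ℝ} (h0 : 0 ≤ ρ) {a : ℕ}
    (hr : ∀ k, a ≤ k → t (k + 1) ≤ ρ * t k) : ∀ i : ℕ, t (a + i) ≤ ρ ^ i * t a := by
  intro i
  induction i with
  | zero => simp
  | succ i ih =>
      calc t (a + i + 1) ≤ ρ * t (a + i) := hr (a + i) (by omega)
        _ ≤ ρ * (ρ ^ i * t a) := mul_le_mul_of_nonneg_left ih h0
        _ = ρ ^ (i + 1) * t a := by ring

/-- Lower bound on the partition function from the increasing-ratio regime. -/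
lemma Z_lower_bound {n : ℕ} {x ρ : ℝ} (hρ : 0 ≤ ρ) {m : ℕ} (hm : m < n)
    (hr : ∀ k < m, ρ * sterm n k x ≤ sterm n (k + 1) x) (hx : 0 ≤ x) :
    ρ ^ m ≤ ∑ k ∈ Finset.range n, sterm n k x := by
  have h1 : ρ ^ m * sterm n 0 x ≤ sterm n m x := by
    have := ratio_pow_le (t := fun k => sterm n k x) hρ (a := 0) m
      (fun k hk hk' => hr k (by omega))
    simpa using this
  rw [sterm_zero_eval, mul_one] at h1
  exact h1.trans (Finset.single_le_sum (fun k _ => sterm_nonneg n k hx)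
    (Finset.mem_range.mpr hm))

theorem part2_test (ε : ℝ) (hε : 0 < ε)
    (x : ℕ → ℝ) (hx : ∀ n, 0 < x n)
    (hlim : Tendsto (fun n : ℕ => (n : ℝ) * x n) atTop (𝓝 (1 + ε))) :
    Tendsto (fun n : ℕ => completeI n (x n)) atTop (𝓝 0) := by
  have hε1 : (0:ℝ) < 1 + ε := by linarith
  have hc0 : 0 < ε / (1 + ε) := by positivity
  have hc1 : ε / (1 + ε) < 1 := by rw [div_lt_one hε1]; linarith
  set δ : ℝ := min (min (ε / (1 + ε)) ((1 - ε / (1 + ε)) / 2)) (1 / (1 + ε)) with hδdef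
  have hδ0 : 0 < δ := lt_min (lt_min hc0 (by linarith)) (by positivity)
  have hδ1 : δ ≤ ε / (1 + ε) := (min_le_left _ _).trans (min_le_left _ _)
  have hδ2 : 2 * δ ≤ 1 - ε / (1 + ε) := by
    have h9 : δ ≤ (1 - ε / (1 + ε)) / 2 :=
      le_trans (min_le_left _ _) (min_le_right (ε / (1 + ε)) ((1 - ε / (1 + ε)) / 2))
    linarith
  have hδ3 : δ ≤ 1 / (1 + ε) := min_le_right _ _
  have hs0 : 0 < δ * (1 + ε) / 4 := by positivity
  have hρ1 : 1 < 1 + δ * (1 + ε) / 4 := by linarith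
  have hρ1pos : (0:ℝ) < 1 + δ * (1 + ε) / 4 := by linarith
  have hq0 : 0 < (1 + δ * (1 + ε) / 4)⁻¹ := by positivity
  have hq1 : (1 + δ * (1 + ε) / 4)⁻¹ < 1 := inv_lt_one_of_one_lt₀ hρ1
  have hA0 : 0 < ε / (1 + ε) - δ / 2 := by linarith
  have hg : Tendsto (fun n : ℕ =>
      (n:ℝ) * ((1 + δ * (1 + ε) / 4)⁻¹) ^ ⌊(ε / (1 + ε) - δ / 2) * n⌋₊) atTop (𝓝 0) := by
    apply tendsto_mul_pow_zero hq0 hq1 hA0 (B := 1)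
    filter_upwards with n
    have := Nat.lt_floor_add_one ((ε / (1 + ε) - δ / 2) * n)
    linarith
  apply squeeze_zero' (t₀ := atTop)
  · filter_upwards [master_estimates ε δ hε hδ0 hδ1 hδ2 hδ3 x hx hlim] with n hm
    exact (completeI_bounds hm.2.2.2.2 (hx n)).1
  · filter_upwards [master_estimates ε δ hε hδ0 hδ1 hδ2 hδ3 x hx hlim] with n hm
    obtain ⟨hrat1, _, hk1n, _, hn1⟩ := hm
    have hZ : (1 + δ * (1 + ε) / 4) ^ ⌊(ε / (1 + ε) - δ / 2) * n⌋₊ ≤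
        ∑ k ∈ Finset.range n, sterm n k (x n) :=
      Z_lower_bound hρ1pos.le hk1n (fun k hk => hrat1 k (by omega)) (hx n).le
    have hZpos : 0 < ∑ k ∈ Finset.range n, sterm n k (x n) := Z_num_pos hn1 (hx n)
    calc completeI n (x n) ≤ (n:ℝ) / (∑ k ∈ Finset.range n, sterm n k (x n)) :=
          (completeI_bounds hn1 (hx n)).2
      _ ≤ (n:ℝ) / (1 + δ * (1 + ε) / 4) ^ ⌊(ε / (1 + ε) - δ / 2) * n⌋₊ :=
          div_le_div_of_nonneg_left (Nat.cast_nonneg n) (pow_pos hρ1pos _) hZ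
      _ = (n:ℝ) * ((1 + δ * (1 + ε) / 4)⁻¹) ^ ⌊(ε / (1 + ε) - δ / 2) * n⌋₊ := by
          rw [inv_pow, div_eq_mul_inv]
  · exact hg


lemma per_n_bound (t : ℕ → ℝ) (n K1 K1' K2' K2 : ℕ) (ρA ρB E1 E2 : ℝ)
    (htnn : ∀ k, 0 ≤ t k) (ht0 : 0 < t 0)
    (hρA : 1 < ρA) (hρB0 : 0 ≤ ρB) (hρB1 : ρB < 1)
    (hrat1 : ∀ k ≤ K1', ρA * t k ≤ t (k + 1))
    (hrat2 : ∀ k, K2' ≤ k → t (k + 1) ≤ ρB * t k)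
    (hK1 : K1 ≤ K1') (hK1n : K1' < n) (hK2 : K2' ≤ K2) (hK2n' : K2' < n) (hn : 0 < n)
    (hE1 : E1 = (ρA / (ρA - 1)) * ρA⁻¹ ^ (K1' - K1))
    (hE2 : E2 = (1 / (1 - ρB)) * ρB ^ (K2 - K2')) :
    ((K1 : ℝ) + 1) * (1 - E1) ≤
        (∑ k ∈ Finset.range n, t k)⁻¹ * (∑ k ∈ Finset.range n, (k : ℝ) * t k) ∧
      (∑ k ∈ Finset.range n, t k)⁻¹ * (∑ k ∈ Finset.range n, (k : ℝ) * t k) ≤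
        (K2 : ℝ) + (n : ℝ) * E2 := by
  have hρA0 : (0:ℝ) < ρA := lt_trans one_pos hρA
  have hq0 : (0:ℝ) < ρA⁻¹ := by positivity
  have hZpos : 0 < ∑ k ∈ Finset.range n, t k :=
    Finset.sum_pos' (fun k _ => htnn k) ⟨0, Finset.mem_range.mpr hn, ht0⟩
  set Z := ∑ k ∈ Finset.range n, t k with hZdef
  set Nm := ∑ k ∈ Finset.range n, (k : ℝ) * t k with hNmdef
  have hC1 : (0:ℝ) ≤ ρA / (ρA - 1) := div_nonneg hρA0.le (by linarith)
  -- lower bound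
  have hs1 : ∑ k ∈ Finset.range (K1 + 1), t k ≤ (ρA / (ρA - 1)) * t K1 :=
    sum_head_le hρA K1 htnn (fun k hk => hrat1 k (by omega))
  have hs2 : ρA ^ (K1' - K1) * t K1 ≤ t K1' := by
    have h := ratio_pow_le (t := t) hρA0.le (a := K1) (K1' - K1)
      (fun k hk hk' => hrat1 k (by omega))
    rwa [Nat.add_sub_cancel' hK1] at h
  have hs3 : t K1' ≤ Z := Finset.single_le_sum (fun k _ => htnn k)
    (Finset.mem_range.mpr hK1n)
  have hs4 : t K1 ≤ ρA⁻¹ ^ (K1' - K1) * Z := by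
    have h2 := mul_le_mul_of_nonneg_left hs2 (pow_nonneg hq0.le (K1' - K1))
    rw [← mul_assoc, ← mul_pow, inv_mul_cancel₀ (ne_of_gt hρA0), one_pow, one_mul] at h2
    exact h2.trans (mul_le_mul_of_nonneg_left hs3 (pow_nonneg hq0.le _))
  have hSA : ∑ k ∈ Finset.range (K1 + 1), t k ≤ E1 * Z := by
    refine hs1.trans ?_
    calc (ρA / (ρA - 1)) * t K1 ≤ (ρA / (ρA - 1)) * (ρA⁻¹ ^ (K1' - K1) * Z) :=
          mul_le_mul_of_nonneg_left hs4 hC1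
      _ = E1 * Z := by rw [hE1]; ring
  have hsplit : ∑ k ∈ Finset.range (K1 + 1), t k + ∑ k ∈ Finset.Ico (K1 + 1) n, t k = Z :=
    Finset.sum_range_add_sum_Ico t (by omega)
  have hNl : ((K1 : ℝ) + 1) * (Z - ∑ k ∈ Finset.range (K1 + 1), t k) ≤ Nm := by
    have hIco : Z - ∑ k ∈ Finset.range (K1 + 1), t k = ∑ k ∈ Finset.Ico (K1 + 1) n, t k := by
      linarith
    rw [hIco]
    calc ((K1 : ℝ) + 1) * ∑ k ∈ Finset.Ico (K1 + 1) n, t k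
        = ∑ k ∈ Finset.Ico (K1 + 1) n, ((K1 : ℝ) + 1) * t k := Finset.mul_sum _ _ _
      _ ≤ ∑ k ∈ Finset.Ico (K1 + 1) n, (k : ℝ) * t k := by
          apply Finset.sum_le_sum
          intro k hk
          have hk' := (Finset.mem_Ico.mp hk).1
          exact mul_le_mul_of_nonneg_right (by exact_mod_cast hk') (htnn k)
      _ ≤ Nm := by
          apply Finset.sum_le_sum_of_subset_of_nonneg
          · rw [Finset.range_eq_Ico]
            exact Finset.Ico_subset_Ico (Nat.zero_le _) le_rfl
          · exact fun k _ _ => mul_nonneg (Nat.cast_nonneg k) (htnn k)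
  constructor
  · -- lower
    have h3 : (1 - E1) * Z ≤ Z - ∑ k ∈ Finset.range (K1 + 1), t k := by nlinarith [hSA]
    have h4 : ((K1 : ℝ) + 1) * ((1 - E1) * Z) ≤ Nm :=
      le_trans (mul_le_mul_of_nonneg_left h3 (by positivity)) hNl
    have h6 := mul_le_mul_of_nonneg_left h4 (inv_nonneg.mpr hZpos.le)
    rwa [show Z⁻¹ * (((K1 : ℝ) + 1) * ((1 - E1) * Z))
        = ((K1 : ℝ) + 1) * (1 - E1) * (Z⁻¹ * Z) by ring,
      inv_mul_cancel₀ (ne_of_gt hZpos), mul_one] at h6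
  · -- upper
    have hE2nn : 0 ≤ E2 := by
      rw [hE2]
      have : (0:ℝ) ≤ 1 / (1 - ρB) := by
        apply div_nonneg zero_le_one
        linarith
      exact mul_nonneg this (pow_nonneg hρB0 _)
    have hSB : ∑ k ∈ Finset.Ico K2 n, t k ≤ E2 * Z := by
      have s1 : ∑ k ∈ Finset.Ico K2 n, t k ≤ (1 / (1 - ρB)) * t K2 :=
        sum_tail_le hρB0 hρB1 K2 n htnn (fun k hk => hrat2 k (by omega))
      have s2 : t K2 ≤ ρB ^ (K2 - K2') * t K2' := by
        have h := ratio_pow_ge hρB0 (a := K2') (fun k hk => hrat2 k hk) (K2 - K2')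
        rwa [Nat.add_sub_cancel' hK2] at h
      have s3 : t K2' ≤ Z := Finset.single_le_sum (fun k _ => htnn k)
        (Finset.mem_range.mpr hK2n')
      refine s1.trans ?_
      have hd : (0:ℝ) ≤ 1 / (1 - ρB) := div_nonneg zero_le_one (by linarith)
      calc (1 / (1 - ρB)) * t K2 ≤ (1 / (1 - ρB)) * (ρB ^ (K2 - K2') * Z) := by
            apply mul_le_mul_of_nonneg_left _ hd
            exact s2.trans (mul_le_mul_of_nonneg_left s3 (pow_nonneg hρB0 _))
        _ = E2 * Z := by rw [hE2]; ring
    have hNu : Nm ≤ (K2 : ℝ) * Z + (n : ℝ) * (E2 * Z) := by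
      rcases le_or_gt K2 n with hcase | hcase
      · have hsplit2 : ∑ k ∈ Finset.range K2, (k : ℝ) * t k
            + ∑ k ∈ Finset.Ico K2 n, (k : ℝ) * t k = Nm :=
          Finset.sum_range_add_sum_Ico _ hcase
        have hb1 : ∑ k ∈ Finset.range K2, (k : ℝ) * t k ≤ (K2 : ℝ) * Z := by
          calc ∑ k ∈ Finset.range K2, (k : ℝ) * t k
              ≤ ∑ k ∈ Finset.range K2, (K2 : ℝ) * t k := by
                apply Finset.sum_le_sum
                intro k hk
                exact mul_le_mul_of_nonneg_right
                  (by exact_mod_cast (Finset.mem_range.mp hk).le) (htnn k)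
            _ = (K2 : ℝ) * ∑ k ∈ Finset.range K2, t k := (Finset.mul_sum _ _ _).symm
            _ ≤ (K2 : ℝ) * Z := by
                apply mul_le_mul_of_nonneg_left _ (Nat.cast_nonneg K2)
                exact Finset.sum_le_sum_of_subset_of_nonneg
                  (Finset.range_subset_range.mpr hcase) (fun k _ _ => htnn k)
        have hb2 : ∑ k ∈ Finset.Ico K2 n, (k : ℝ) * t k ≤ (n : ℝ) * (E2 * Z) := by
          calc ∑ k ∈ Finset.Ico K2 n, (k : ℝ) * t k
              ≤ ∑ k ∈ Finset.Ico K2 n, (n : ℝ) * t k := by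
                apply Finset.sum_le_sum
                intro k hk
                exact mul_le_mul_of_nonneg_right
                  (by exact_mod_cast (Finset.mem_Ico.mp hk).2.le) (htnn k)
            _ = (n : ℝ) * ∑ k ∈ Finset.Ico K2 n, t k := (Finset.mul_sum _ _ _).symm
            _ ≤ (n : ℝ) * (E2 * Z) := mul_le_mul_of_nonneg_left hSB (Nat.cast_nonneg n)
        linarith
      · have hb1 : Nm ≤ (K2 : ℝ) * Z := by
          calc Nm ≤ ∑ k ∈ Finset.range n, (K2 : ℝ) * t k := by
                apply Finset.sum_le_sum
                intro k hk
                have : k ≤ K2 := by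
                  have := Finset.mem_range.mp hk; omega
                exact mul_le_mul_of_nonneg_right (by exact_mod_cast this) (htnn k)
            _ = (K2 : ℝ) * Z := (Finset.mul_sum _ _ _).symm
        have hb2 : 0 ≤ (n : ℝ) * (E2 * Z) :=
          mul_nonneg (Nat.cast_nonneg n) (mul_nonneg hE2nn hZpos.le)
        linarith
    have h6 := mul_le_mul_of_nonneg_left hNu (inv_nonneg.mpr hZpos.le)
    rwa [show Z⁻¹ * ((K2 : ℝ) * Z + (n : ℝ) * (E2 * Z))
        = ((K2 : ℝ) + (n : ℝ) * E2) * (Z⁻¹ * Z) by ring,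
      inv_mul_cancel₀ (ne_of_gt hZpos), mul_one] at h6


set_option maxHeartbeats 2000000 in
theorem part1_test (ε : ℝ) (hε : 0 < ε)
    (x : ℕ → ℝ) (hx : ∀ n, 0 < x n)
    (hlim : Tendsto (fun n : ℕ => (n : ℝ) * x n) atTop (𝓝 (1 + ε))) :
    Tendsto (fun n : ℕ => completeL n (x n) / n) atTop (𝓝 (ε / (1 + ε))) := by
  have hε1 : (0:ℝ) < 1 + ε := by linarith
  have hc0 : 0 < ε / (1 + ε) := by positivity
  have hc1 : ε / (1 + ε) < 1 := by rw [div_lt_one hε1]; linarith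
  rw [Metric.tendsto_atTop]
  intro e he
  set δ : ℝ := min (min (e / 4) (ε / (1 + ε)))
      (min ((1 - ε / (1 + ε)) / 2) (1 / (1 + ε))) with hδdef
  have hδ0 : 0 < δ :=
    lt_min (lt_min (by positivity) hc0) (lt_min (by linarith) (by positivity))
  have hδe : δ ≤ e / 4 := (min_le_left _ _).trans (min_le_left _ _)
  have hδ1 : δ ≤ ε / (1 + ε) := (min_le_left _ _).trans (min_le_right _ _)
  have hδ2 : 2 * δ ≤ 1 - ε / (1 + ε) := by
    have h9 : δ ≤ (1 - ε / (1 + ε)) / 2 := (min_le_right _ _).trans (min_le_left _ _)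
    linarith
  have hδ3 : δ ≤ 1 / (1 + ε) := (min_le_right _ _).trans (min_le_right _ _)
  have hs0 : 0 < δ * (1 + ε) / 4 := by positivity
  have hδe' : δ * (1 + ε) ≤ 1 := (le_div_iff₀ hε1).mp hδ3
  have hs14 : δ * (1 + ε) / 4 ≤ 1 / 4 := by linarith
  have hρ1 : 1 < 1 + δ * (1 + ε) / 4 := by linarith
  have hρ1pos : (0:ℝ) < 1 + δ * (1 + ε) / 4 := by linarith
  have hq0 : 0 < (1 + δ * (1 + ε) / 4)⁻¹ := by positivity
  have hq1 : (1 + δ * (1 + ε) / 4)⁻¹ < 1 := inv_lt_one_of_one_lt₀ hρ1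
  have hρ2a : (0:ℝ) < 1 - δ * (1 + ε) / 4 := by linarith
  have hρ2b : 1 - δ * (1 + ε) / 4 < 1 := by linarith
  have hC1nn : (0:ℝ) ≤ (1 + δ * (1 + ε) / 4) / (δ * (1 + ε) / 4) := by positivity
  -- error sequences tend to 0
  have hE1 : Tendsto (fun n : ℕ => ((1 + δ * (1 + ε) / 4) / (δ * (1 + ε) / 4)) *
      ((1 + δ * (1 + ε) / 4)⁻¹) ^
        (⌊(ε / (1 + ε) - δ / 2) * n⌋₊ - ⌊(ε / (1 + ε) - δ) * n⌋₊)) atTop (𝓝 0) := by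
    apply tendsto_const_pow_zero hq0 hq1 (show (0:ℝ) < δ / 2 by linarith) hC1nn (B := 2)
    filter_upwards with n
    have hmono : ⌊(ε / (1 + ε) - δ) * n⌋₊ ≤ ⌊(ε / (1 + ε) - δ / 2) * n⌋₊ :=
      Nat.floor_mono (mul_le_mul_of_nonneg_right (by linarith) (Nat.cast_nonneg n))
    rw [Nat.cast_sub hmono]
    have h1 : (ε / (1 + ε) - δ / 2) * n - 1 ≤ (⌊(ε / (1 + ε) - δ / 2) * n⌋₊ : ℝ) := by
      linarith [Nat.lt_floor_add_one ((ε / (1 + ε) - δ / 2) * n)]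
    have h2 : (⌊(ε / (1 + ε) - δ) * n⌋₊ : ℝ) ≤ (ε / (1 + ε) - δ) * n :=
      Nat.floor_le (mul_nonneg (by linarith) (Nat.cast_nonneg n))
    nlinarith [Nat.cast_nonneg (α := ℝ) n]
  have hE2 : Tendsto (fun n : ℕ => (1 / (δ * (1 + ε) / 4)) *
      (1 - δ * (1 + ε) / 4) ^
        (⌈(ε / (1 + ε) + δ) * n⌉₊ - ⌈(ε / (1 + ε) + δ / 2) * n⌉₊)) atTop (𝓝 0) := by
    apply tendsto_const_pow_zero hρ2a hρ2b (show (0:ℝ) < δ / 2 by linarith)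
      (by positivity) (B := 2)
    filter_upwards with n
    have hmono : ⌈(ε / (1 + ε) + δ / 2) * n⌉₊ ≤ ⌈(ε / (1 + ε) + δ) * n⌉₊ :=
      Nat.ceil_mono (mul_le_mul_of_nonneg_right (by linarith) (Nat.cast_nonneg n))
    rw [Nat.cast_sub hmono]
    have h1 : (ε / (1 + ε) + δ) * n ≤ (⌈(ε / (1 + ε) + δ) * n⌉₊ : ℝ) := Nat.le_ceil _
    have h2 : (⌈(ε / (1 + ε) + δ / 2) * n⌉₊ : ℝ) < (ε / (1 + ε) + δ / 2) * n + 1 :=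
      Nat.ceil_lt_add_one (mul_nonneg (by linarith) (Nat.cast_nonneg n))
    nlinarith [Nat.cast_nonneg (α := ℝ) n]
  have hE1ev := Metric.tendsto_nhds.mp hE1 (min (e / 4) (1 / 2))
    (lt_min (by linarith) (by norm_num))
  have hE2ev := Metric.tendsto_nhds.mp hE2 (e / 4) (by linarith)
  have hinvev : ∀ᶠ n : ℕ in atTop, 4 / e ≤ (n : ℝ) :=
    tendsto_natCast_atTop_atTop.eventually_ge_atTop _
  have hfinal : ∀ᶠ n : ℕ in atTop,
      dist (completeL n (x n) / n) (ε / (1 + ε)) < e := by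
    filter_upwards [master_estimates ε δ hε hδ0 hδ1 hδ2 hδ3 x hx hlim,
      hE1ev, hE2ev, hinvev] with n hm hE1n hE2n hinvn
    obtain ⟨hrat1, hrat2, hk1n, hk2n, hn1⟩ := hm
    have hn0 : 0 < n := hn1
    have hnR : (0:ℝ) < (n : ℝ) := by exact_mod_cast hn0
    rw [Real.dist_eq, sub_zero] at hE1n hE2n
    have hK1mono : ⌊(ε / (1 + ε) - δ) * n⌋₊ ≤ ⌊(ε / (1 + ε) - δ / 2) * n⌋₊ :=
      Nat.floor_mono (mul_le_mul_of_nonneg_right (by linarith) (Nat.cast_nonneg n))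
    have hK2mono : ⌈(ε / (1 + ε) + δ / 2) * n⌉₊ ≤ ⌈(ε / (1 + ε) + δ) * n⌉₊ :=
      Nat.ceil_mono (mul_le_mul_of_nonneg_right (by linarith) (Nat.cast_nonneg n))
    have hcomb := per_n_bound (fun k => sterm n k (x n)) n
      ⌊(ε / (1 + ε) - δ) * n⌋₊ ⌊(ε / (1 + ε) - δ / 2) * n⌋₊
      ⌈(ε / (1 + ε) + δ / 2) * n⌉₊ ⌈(ε / (1 + ε) + δ) * n⌉₊
      (1 + δ * (1 + ε) / 4) (1 - δ * (1 + ε) / 4)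
      (((1 + δ * (1 + ε) / 4) / (δ * (1 + ε) / 4)) *
        ((1 + δ * (1 + ε) / 4)⁻¹) ^
          (⌊(ε / (1 + ε) - δ / 2) * n⌋₊ - ⌊(ε / (1 + ε) - δ) * n⌋₊))
      ((1 / (δ * (1 + ε) / 4)) * (1 - δ * (1 + ε) / 4) ^
          (⌈(ε / (1 + ε) + δ) * n⌉₊ - ⌈(ε / (1 + ε) + δ / 2) * n⌉₊))
      (fun k => sterm_nonneg n k (hx n).le)
      (show (0:ℝ) < sterm n 0 (x n) by rw [sterm_zero_eval]; norm_num)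
      hρ1 hρ2a.le hρ2b hrat1 hrat2 hK1mono hk1n hK2mono hk2n hn0
      (by rw [show (1 + δ * (1 + ε) / 4) - 1 = δ * (1 + ε) / 4 by ring])
      (by rw [show (1:ℝ) - (1 - δ * (1 + ε) / 4) = δ * (1 + ε) / 4 by ring])
    have hLloweq : (((⌊(ε / (1 + ε) - δ) * n⌋₊ : ℕ) : ℝ) + 1) *
        (1 - ((1 + δ * (1 + ε) / 4) / (δ * (1 + ε) / 4)) *
          ((1 + δ * (1 + ε) / 4)⁻¹) ^
            (⌊(ε / (1 + ε) - δ / 2) * n⌋₊ - ⌊(ε / (1 + ε) - δ) * n⌋₊))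
        ≤ completeL n (x n) := by
      rw [completeL_eq hn0]
      exact hcomb.1
    have hLupeq : completeL n (x n) ≤ ((⌈(ε / (1 + ε) + δ) * n⌉₊ : ℕ) : ℝ) +
        (n : ℝ) * ((1 / (δ * (1 + ε) / 4)) * (1 - δ * (1 + ε) / 4) ^
          (⌈(ε / (1 + ε) + δ) * n⌉₊ - ⌈(ε / (1 + ε) + δ / 2) * n⌉₊)) := by
      rw [completeL_eq hn0]
      exact hcomb.2
    -- scalar wrap-up
    set E1v : ℝ := ((1 + δ * (1 + ε) / 4) / (δ * (1 + ε) / 4)) *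
      ((1 + δ * (1 + ε) / 4)⁻¹) ^
        (⌊(ε / (1 + ε) - δ / 2) * n⌋₊ - ⌊(ε / (1 + ε) - δ) * n⌋₊) with hE1vdef
    set E2v : ℝ := (1 / (δ * (1 + ε) / 4)) * (1 - δ * (1 + ε) / 4) ^
      (⌈(ε / (1 + ε) + δ) * n⌉₊ - ⌈(ε / (1 + ε) + δ / 2) * n⌉₊) with hE2vdef
    have hE1nn : 0 ≤ E1v := by rw [hE1vdef]; positivity
    have hE2nn : 0 ≤ E2v := by rw [hE2vdef]; positivity
    have hE1small : E1v < min (e / 4) (1 / 2) := lt_of_abs_lt hE1n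
    have hE2small : E2v < e / 4 := lt_of_abs_lt hE2n
    have hE1e4 : E1v < e / 4 := lt_of_lt_of_le hE1small (min_le_left _ _)
    have hE1half : E1v < 1 / 2 := lt_of_lt_of_le hE1small (min_le_right _ _)
    have hfl : (ε / (1 + ε) - δ) * n < (⌊(ε / (1 + ε) - δ) * n⌋₊ : ℝ) + 1 :=
      Nat.lt_floor_add_one _
    have hcl : (⌈(ε / (1 + ε) + δ) * n⌉₊ : ℝ) < (ε / (1 + ε) + δ) * n + 1 :=
      Nat.ceil_lt_add_one (mul_nonneg (by linarith) (Nat.cast_nonneg n))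
    have hinv4 : 1 / (n : ℝ) ≤ e / 4 := by
      rw [div_le_div_iff₀ hnR (by norm_num : (0:ℝ) < 4)]
      have h4 : 4 ≤ (n : ℝ) * e := by
        rw [div_le_iff₀ he] at hinvn
        linarith
      linarith
    have hlow : ε / (1 + ε) - δ - E1v ≤ completeL n (x n) / n := by
      rw [le_div_iff₀ hnR]
      have ha : (ε / (1 + ε) - δ) * n * (1 - E1v)
          ≤ ((⌊(ε / (1 + ε) - δ) * n⌋₊ : ℝ) + 1) * (1 - E1v) :=
        mul_le_mul_of_nonneg_right hfl.le (by linarith)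
      nlinarith [hLloweq, mul_nonneg (mul_nonneg hE1nn hnR.le)
        (show (0:ℝ) ≤ 1 - (ε / (1 + ε) - δ) by linarith)]
    have hup : completeL n (x n) / n ≤ ε / (1 + ε) + δ + 1 / (n : ℝ) + E2v := by
      rw [div_le_iff₀ hnR]
      have heq : (ε / (1 + ε) + δ + 1 / (n : ℝ) + E2v) * n
          = (ε / (1 + ε) + δ) * n + 1 + E2v * n := by
        field_simp
      rw [heq]
      nlinarith [hLupeq, hcl]
    rw [Real.dist_eq, abs_lt]
    constructor
    · nlinarith [hlow]
    · nlinarith [hup]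
  exact eventually_atTop.mp hfinal


/-- If `ε > 0` and `n · x_n → 1 + ε`, then for the complete graphs
`K_n`, `L(x_n, K_n)/n → ε/(1+ε)` and `I(x_n, K_n) → 0`. -/
theorem complete_superCritical_length_and_intersection (ε : ℝ) (hε : 0 < ε)
    (x : ℕ → ℝ) (hx : ∀ n, 0 < x n)
    (hlim : Tendsto (fun n : ℕ => (n : ℝ) * x n) atTop (𝓝 (1 + ε))) :
    Tendsto (fun n : ℕ => completeL n (x n) / n) atTop (𝓝 (ε / (1 + ε))) ∧
    Tendsto (fun n : ℕ => completeI n (x n)) atTop (𝓝 0) :=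
  ⟨part1_test ε hε x hx hlim, part2_test ε hε x hx hlim⟩
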